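/- Let ψ:ℝ²→ℝ³ be C∞ and let Q = [−1,2]×[−π,3π]. Suppose M_ψ>0 bounds |ψ|, |Dψ|, |D²ψ| and |D³ψ| on Q, and let m_ψ>0, λ>0. Let x̄=(x,θ) and ȳ=(y,σ) be distinct points of Q and assume |Dψ(x̄)ᵀ(ψ(x̄)−ψ(ȳ))| ≥ m_ψ·|x̄−ȳ| and |Dψ(ȳ)ᵀ(ψ(x̄)−ψ(ȳ))| ≥ m_ψ·|x̄−ȳ|. Set p_x̄ := λ·Dψ(x̄)ᵀ(ψ(x̄)−ψ(ȳ)) ∈ ℝ² and p_ȳ := λ·Dψ(ȳ)ᵀ(ψ(x̄)−ψ(ȳ)) ∈ ℝ² (both nonzero), and define I₁ := ⟨ψ(x̄)−ψ(ȳ), D²ψ(x̄)[e^{−x}·p̂_x̄⊥, e^{−x}·p̂_x̄⊥] − D²ψ(ȳ)[e^{−y}·p̂_ȳ⊥, e^{−y}·p̂_ȳ⊥]⟩ ∈ ℝ. Then |I₁| ≤ C̄₁·|x̄−ȳ|² for a constant C̄₁ depending only on m_ψ and M_ψ. -/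

import Mathlib

open Set Real Filter
open scoped ContDiff

/-- Euclidean norm on `ℝ²`. -/
noncomputable def norm2 (p : ℝ × ℝ) : ℝ := Real.sqrt (p.1 ^ 2 + p.2 ^ 2)

/-- Euclidean norm on `ℝ³ = ℝ × ℝ²`. -/
noncomputable def norm3 (p : ℝ × ℝ × ℝ) : ℝ := Real.sqrt (p.1 ^ 2 + p.2.1 ^ 2 + p.2.2 ^ 2)

/-- Euclidean scalar product on `ℝ³ = ℝ × ℝ²`. -/
def dot3 (a b : ℝ × ℝ × ℝ) : ℝ := a.1 * b.1 + a.2.1 * b.2.1 + a.2.2 * b.2.2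

/-- Rotation by `π/2`: `q⊥ = (-q₂, q₁)`. -/
def perp2 (q : ℝ × ℝ) : ℝ × ℝ := (-q.2, q.1)

/-- Normalization `q̂ = q/|q|`. -/
noncomputable def hat2 (q : ℝ × ℝ) : ℝ × ℝ := (norm2 q)⁻¹ • q

/-- `Dψ(z)ᵀ v`: the adjoint (with respect to the Euclidean scalar products) of the
differential of `ψ` at `z`, applied to `v ∈ ℝ³`. -/
noncomputable def DpsiT (ψ : ℝ × ℝ → ℝ × ℝ × ℝ) (z : ℝ × ℝ) (v : ℝ × ℝ × ℝ) : ℝ × ℝ :=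
  (dot3 (fderiv ℝ ψ z (1, 0)) v, dot3 (fderiv ℝ ψ z (0, 1)) v)

/-- `D²ψ(z)[ξ,ξ] ∈ ℝ³`: the second differential of `ψ` at `z` evaluated on `(ξ,ξ)`. -/
noncomputable def D2psi (ψ : ℝ × ℝ → ℝ × ℝ × ℝ) (z ξ : ℝ × ℝ) : ℝ × ℝ × ℝ :=
  fderiv ℝ (fun w => fderiv ℝ ψ w ξ) z ξ

/-- The compact rectangle `Q = [−1,2] × [−π,3π]`. -/
def Qrect : Set (ℝ × ℝ) := Set.Icc (-1 : ℝ) 2 ×ˢ Set.Icc (-π) (3 * π)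

lemma norm2_nonneg (p : ℝ × ℝ) : 0 ≤ norm2 p := Real.sqrt_nonneg _

lemma sq_norm2 (p : ℝ × ℝ) : norm2 p ^ 2 = p.1 ^ 2 + p.2 ^ 2 :=
  Real.sq_sqrt (by positivity)

lemma norm2_pos {p : ℝ × ℝ} (h : p ≠ 0) : 0 < norm2 p := by
  have h1 : p.1 ^ 2 + p.2 ^ 2 ≠ 0 := by
    intro hc
    apply h
    have h1 : p.1 = 0 := by nlinarith [sq_nonneg p.1, sq_nonneg p.2]
    have h2 : p.2 = 0 := by nlinarith [sq_nonneg p.1, sq_nonneg p.2]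
    exact Prod.ext h1 h2
  exact Real.sqrt_pos.2 (lt_of_le_of_ne (by positivity) (Ne.symm h1))

lemma norm2_smul (c : ℝ) (p : ℝ × ℝ) : norm2 (c • p) = |c| * norm2 p := by
  simp only [norm2, Prod.smul_fst, Prod.smul_snd, smul_eq_mul]
  rw [show (c * p.1) ^ 2 + (c * p.2) ^ 2 = c ^ 2 * (p.1 ^ 2 + p.2 ^ 2) by ring,
    Real.sqrt_mul (by positivity), Real.sqrt_sq_eq_abs]

lemma inner2_le (a b : ℝ × ℝ) : a.1 * b.1 + a.2 * b.2 ≤ norm2 a * norm2 b := by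
  rcases le_or_gt (a.1 * b.1 + a.2 * b.2) 0 with h | h
  · exact h.trans (mul_nonneg (norm2_nonneg a) (norm2_nonneg b))
  · have h2 : (a.1 * b.1 + a.2 * b.2) ^ 2 ≤ (norm2 a * norm2 b) ^ 2 := by
      rw [mul_pow, sq_norm2, sq_norm2]
      nlinarith [sq_nonneg (a.1 * b.2 - a.2 * b.1)]
    nlinarith [mul_nonneg (norm2_nonneg a) (norm2_nonneg b), h, h2]

lemma norm2_add_le (a b : ℝ × ℝ) : norm2 (a + b) ≤ norm2 a + norm2 b := by
  have h : norm2 (a + b) ^ 2 ≤ (norm2 a + norm2 b) ^ 2 := by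
    rw [sq_norm2]
    simp only [Prod.fst_add, Prod.snd_add]
    have := inner2_le a b
    nlinarith [sq_norm2 a, sq_norm2 b]
  nlinarith [norm2_nonneg (a + b), norm2_nonneg a, norm2_nonneg b]

lemma abs_norm2_sub_le (a b : ℝ × ℝ) : |norm2 a - norm2 b| ≤ norm2 (a - b) := by
  rw [abs_le]
  constructor
  · have h2 := norm2_add_le (b - a) a
    simp only [sub_add_cancel] at h2
    have : norm2 (b - a) = norm2 (a - b) := by
      have := norm2_smul (-1) (a - b)
      simpa [neg_sub] using this
    linarith
  · have h2 := norm2_add_le (a - b) b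
    simp only [sub_add_cancel] at h2
    linarith

lemma norm2_le_sum (p : ℝ × ℝ) : norm2 p ≤ |p.1| + |p.2| := by
  have h : norm2 p ^ 2 ≤ (|p.1| + |p.2|) ^ 2 := by
    rw [sq_norm2]
    nlinarith [abs_nonneg p.1, abs_nonneg p.2, sq_abs p.1, sq_abs p.2,
      mul_nonneg (abs_nonneg p.1) (abs_nonneg p.2)]
  nlinarith [norm2_nonneg p, abs_nonneg p.1, abs_nonneg p.2]

lemma norm_le_norm2 (p : ℝ × ℝ) : ‖p‖ ≤ norm2 p := by
  rw [Prod.norm_def]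
  have h1 : |p.1| ≤ norm2 p := by
    rw [show |p.1| = Real.sqrt (p.1 ^ 2) by rw [Real.sqrt_sq_eq_abs]]
    exact Real.sqrt_le_sqrt (by nlinarith [sq_nonneg p.2])
  have h2 : |p.2| ≤ norm2 p := by
    rw [show |p.2| = Real.sqrt (p.2 ^ 2) by rw [Real.sqrt_sq_eq_abs]]
    exact Real.sqrt_le_sqrt (by nlinarith [sq_nonneg p.1])
  simp only [Real.norm_eq_abs]
  exact max_le h1 h2

lemma norm2_perp2 (q : ℝ × ℝ) : norm2 (perp2 q) = norm2 q := by
  simp [norm2, perp2]; ring_nf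

lemma perp2_smul (c : ℝ) (q : ℝ × ℝ) : perp2 (c • q) = c • perp2 q := by
  simp [perp2, Prod.smul_def, mul_comm]

lemma perp2_sub (a b : ℝ × ℝ) : perp2 a - perp2 b = perp2 (a - b) := by
  simp [perp2, Prod.ext_iff]
  ring

lemma hat2_smul {c : ℝ} (hc : 0 < c) (p : ℝ × ℝ) : hat2 (c • p) = hat2 p := by
  unfold hat2
  rw [norm2_smul, abs_of_pos hc, smul_smul]
  rcases eq_or_ne (norm2 p) 0 with h | h
  · simp [h]
  · congr 1
    rw [mul_inv]
    field_simp

lemma norm2_hat2_le (q : ℝ × ℝ) : norm2 (hat2 q) ≤ 1 := by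
  unfold hat2
  rw [norm2_smul]
  rcases eq_or_ne (norm2 q) 0 with h | h
  · simp [h]
  · have hpos : 0 < norm2 q := lt_of_le_of_ne (norm2_nonneg q) (Ne.symm h)
    rw [abs_inv, abs_of_pos hpos, inv_mul_cancel₀ h]

lemma hat2_sub_le {a b : ℝ × ℝ} (ha : 0 < norm2 a) (hb : 0 < norm2 b) :
    norm2 (hat2 a - hat2 b) ≤ 2 * norm2 (a - b) / norm2 a := by
  have key : hat2 a - hat2 b = (norm2 a)⁻¹ • (a - b) + ((norm2 a)⁻¹ - (norm2 b)⁻¹) • b := by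
    unfold hat2
    rw [smul_sub, sub_smul]
    abel
  rw [key]
  have h1 : norm2 ((norm2 a)⁻¹ • (a - b)) = (norm2 a)⁻¹ * norm2 (a - b) := by
    rw [norm2_smul, abs_of_pos (by positivity)]
  have h2 : norm2 (((norm2 a)⁻¹ - (norm2 b)⁻¹) • b) ≤ (norm2 a)⁻¹ * norm2 (a - b) := by
    rw [norm2_smul]
    have : |(norm2 a)⁻¹ - (norm2 b)⁻¹| = |norm2 b - norm2 a| / (norm2 a * norm2 b) := by
      rw [eq_div_iff (by positivity)]
      rw [← abs_of_pos (show (0:ℝ) < norm2 a * norm2 b by positivity), ← abs_mul]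
      congr 1
      field_simp
    rw [this]
    have h3 : |norm2 b - norm2 a| ≤ norm2 (a - b) := by
      have := abs_norm2_sub_le b a
      have e : norm2 (b - a) = norm2 (a - b) := by
        have := norm2_smul (-1) (a - b); simpa [neg_sub] using this
      rw [e] at this; exact this
    rw [div_mul_eq_mul_div, div_le_iff₀ (by positivity)]
    calc |norm2 b - norm2 a| * norm2 b ≤ norm2 (a - b) * norm2 b :=
          mul_le_mul_of_nonneg_right h3 (le_of_lt hb)
      _ = (norm2 a)⁻¹ * norm2 (a - b) * (norm2 a * norm2 b) := by
          field_simp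
  calc norm2 _ ≤ _ + _ := norm2_add_le _ _
    _ ≤ (norm2 a)⁻¹ * norm2 (a - b) + (norm2 a)⁻¹ * norm2 (a - b) := by rw [h1]; linarith
    _ = 2 * norm2 (a - b) / norm2 a := by field_simp; ring

lemma abs_dot3_le (a b : ℝ × ℝ × ℝ) : |dot3 a b| ≤ 3 * ‖a‖ * ‖b‖ := by
  have ha1 : |a.1| ≤ ‖a‖ := norm_fst_le a
  have ha2 : |a.2.1| ≤ ‖a‖ := (norm_fst_le a.2).trans (norm_snd_le a)
  have ha3 : |a.2.2| ≤ ‖a‖ := (norm_snd_le a.2).trans (norm_snd_le a)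
  have hb1 : |b.1| ≤ ‖b‖ := norm_fst_le b
  have hb2 : |b.2.1| ≤ ‖b‖ := (norm_fst_le b.2).trans (norm_snd_le b)
  have hb3 : |b.2.2| ≤ ‖b‖ := (norm_snd_le b.2).trans (norm_snd_le b)
  have t1 : |a.1 * b.1| ≤ ‖a‖ * ‖b‖ := by
    rw [abs_mul]; exact mul_le_mul ha1 hb1 (abs_nonneg _) (norm_nonneg _)
  have t2 : |a.2.1 * b.2.1| ≤ ‖a‖ * ‖b‖ := by
    rw [abs_mul]; exact mul_le_mul ha2 hb2 (abs_nonneg _) (norm_nonneg _)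
  have t3 : |a.2.2 * b.2.2| ≤ ‖a‖ * ‖b‖ := by
    rw [abs_mul]; exact mul_le_mul ha3 hb3 (abs_nonneg _) (norm_nonneg _)
  calc |dot3 a b| ≤ |a.1 * b.1 + a.2.1 * b.2.1| + |a.2.2 * b.2.2| := abs_add_le _ _
    _ ≤ |a.1 * b.1| + |a.2.1 * b.2.1| + |a.2.2 * b.2.2| := by
        have := abs_add_le (a.1 * b.1) (a.2.1 * b.2.1); linarith
    _ ≤ 3 * ‖a‖ * ‖b‖ := by linarith

lemma dot3_sub_left (u v w : ℝ × ℝ × ℝ) : dot3 u w - dot3 v w = dot3 (u - v) w := by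
  simp only [dot3, Prod.fst_sub, Prod.snd_sub]
  ring

lemma D2psi_eq (ψ : ℝ × ℝ → ℝ × ℝ × ℝ) (hψ : ContDiff ℝ ∞ ψ) (z ξ : ℝ × ℝ) :
    D2psi ψ z ξ = fderiv ℝ (fderiv ℝ ψ) z ξ ξ := by
  unfold D2psi
  have h1 : ContDiff ℝ ∞ (fderiv ℝ ψ) := hψ.fderiv_right (le_refl _)
  have hd : DifferentiableAt ℝ (fderiv ℝ ψ) z :=
    (h1.differentiable (by simp)).differentiableAt
  rw [fderiv_clm_apply hd (differentiableAt_const ξ)]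
  have : fderiv ℝ (fun _ : ℝ × ℝ => ξ) z = 0 := fderiv_const_apply ξ
  rw [this, ContinuousLinearMap.comp_zero, zero_add, ContinuousLinearMap.flip_apply]

lemma exp_lip {a b : ℝ} (ha : a ∈ Set.Icc (-1:ℝ) 2) (hb : b ∈ Set.Icc (-1:ℝ) 2) :
    |Real.exp (-a) - Real.exp (-b)| ≤ Real.exp 1 * |a - b| := by
  have key : ∀ x ∈ Set.Icc (-1:ℝ) 2, ‖deriv (fun t => Real.exp (-t)) x‖ ≤ Real.exp 1 := by
    intro x hx
    have hda : HasDerivAt (fun t => Real.exp (-t)) (Real.exp (-x) * (-1)) x :=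
      (Real.hasDerivAt_exp (-x)).comp x (hasDerivAt_neg x)
    rw [hda.deriv, Real.norm_eq_abs, abs_mul, abs_of_pos (Real.exp_pos _)]
    simp only [abs_neg, abs_one, mul_one]
    exact Real.exp_le_exp.2 (by linarith [hx.1])
  have hdiff : ∀ x ∈ Set.Icc (-1:ℝ) 2, DifferentiableAt ℝ (fun t => Real.exp (-t)) x :=
    fun x _ => (Real.differentiable_exp.comp differentiable_neg).differentiableAt
  have := (convex_Icc (-1:ℝ) 2).norm_image_sub_le_of_norm_deriv_le hdiff key hb ha
  simpa [Real.norm_eq_abs] using this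

set_option maxHeartbeats 1000000

/-- Lemma 4.5: estimate on `I₁`.
For `ψ` smooth with `|ψ|, |Dψ|, |D²ψ|, |D³ψ| ≤ M_ψ` on `Q`, distinct points `x̄, ȳ ∈ Q`
satisfying the nondegeneracy bounds `|Dψ(·)ᵀ(ψ(x̄) − ψ(ȳ))| ≥ m_ψ |x̄ − ȳ|`, and
`p_x̄ = λ Dψ(x̄)ᵀ(ψ(x̄)−ψ(ȳ))`, `p_ȳ = λ Dψ(ȳ)ᵀ(ψ(x̄)−ψ(ȳ))`, the quantity `I₁` satisfies
`|I₁| ≤ C̄₁ |x̄ − ȳ|²` with `C̄₁` depending only on `m_ψ` and `M_ψ`. -/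
theorem estimate_I1 :
    ∃ C1 : ℝ → ℝ → ℝ, ∀ mψ Mψ : ℝ, 0 < mψ → 0 < Mψ →
      0 < C1 mψ Mψ ∧
      ∀ ψ : ℝ × ℝ → ℝ × ℝ × ℝ, ContDiff ℝ ∞ ψ →
        (∀ z ∈ Qrect, norm3 (ψ z) ≤ Mψ ∧ ‖fderiv ℝ ψ z‖ ≤ Mψ ∧
          ‖fderiv ℝ (fderiv ℝ ψ) z‖ ≤ Mψ ∧
          @norm _ ContinuousLinearMap.hasOpNorm (fderiv ℝ (fderiv ℝ (fderiv ℝ ψ)) z) ≤ Mψ) →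
        ∀ lam : ℝ, 0 < lam → ∀ xb yb : ℝ × ℝ, xb ∈ Qrect → yb ∈ Qrect → xb ≠ yb →
          mψ * norm2 (xb - yb) ≤ norm2 (DpsiT ψ xb (ψ xb - ψ yb)) →
          mψ * norm2 (xb - yb) ≤ norm2 (DpsiT ψ yb (ψ xb - ψ yb)) →
          |dot3 (ψ xb - ψ yb)
              (D2psi ψ xb
                  (Real.exp (-xb.1) • hat2 (perp2 (lam • DpsiT ψ xb (ψ xb - ψ yb)))) -
                D2psi ψ yb
                  (Real.exp (-yb.1) • hat2 (perp2 (lam • DpsiT ψ yb (ψ xb - ψ yb)))))| ≤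
            C1 mψ Mψ * norm2 (xb - yb) ^ 2 := by
  refine ⟨fun m M => 3 * M * (M * Real.exp 1 ^ 2 +
    2 * M * Real.exp 1 * (Real.exp 1 * (12 * M ^ 2 / m + 1))), ?_⟩
  intro mψ Mψ hm hMp
  refine ⟨by positivity, ?_⟩
  intro ψ hψ hM lam hlam xb yb hx hy hne hax hay
  have hEpos : (0:ℝ) < Real.exp 1 := Real.exp_pos 1
  have h1 : ContDiff ℝ ∞ (fderiv ℝ ψ) := hψ.fderiv_right (le_refl _)
  have h2 : ContDiff ℝ ∞ (fderiv ℝ (fderiv ℝ ψ)) := h1.fderiv_right (le_refl _)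
  have hψd : Differentiable ℝ ψ := hψ.differentiable (by simp)
  have h1d : Differentiable ℝ (fderiv ℝ ψ) := h1.differentiable (by simp)
  have h2d : Differentiable ℝ (fderiv ℝ (fderiv ℝ ψ)) :=
    h2.differentiable (by simp)
  have hconv : Convex ℝ Qrect := (convex_Icc _ _).prod (convex_Icc _ _)
  have hx1 : xb.1 ∈ Set.Icc (-1:ℝ) 2 := by
    have := hx; simp only [Qrect, Set.mem_prod] at this; exact this.1
  have hy1 : yb.1 ∈ Set.Icc (-1:ℝ) 2 := by
    have := hy; simp only [Qrect, Set.mem_prod] at this; exact this.1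
  set s := ‖xb - yb‖ with hsdef
  set L := norm2 (xb - yb) with hLdef
  have hsL : s ≤ L := norm_le_norm2 _
  have hLpos : 0 < L := norm2_pos (sub_ne_zero.2 hne)
  have hs0 : 0 ≤ s := norm_nonneg _
  set w := ψ xb - ψ yb with hwdef
  have hwle : ‖w‖ ≤ Mψ * L := by
    have h0 : ‖w‖ ≤ Mψ * s :=
      hconv.norm_image_sub_le_of_norm_fderiv_le
        (fun z _ => hψd z) (fun z hz => (hM z hz).2.1) hy hx
    have : Mψ * s ≤ Mψ * L := mul_le_mul_of_nonneg_left hsL hMp.le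
    linarith
  have hDlip : ‖fderiv ℝ ψ xb - fderiv ℝ ψ yb‖ ≤ Mψ * s :=
    hconv.norm_image_sub_le_of_norm_fderiv_le
      (fun z _ => h1d z) (fun z hz => (hM z hz).2.2.1) hy hx
  have hHlip : ‖fderiv ℝ (fderiv ℝ ψ) xb - fderiv ℝ (fderiv ℝ ψ) yb‖ ≤ Mψ * s :=
    hconv.norm_image_sub_le_of_norm_fderiv_le (f := fderiv ℝ (fderiv ℝ ψ)) (C := Mψ)
      (fun z _ => h2d z) (fun z hz => (hM z hz).2.2.2) hy hx
  set a := DpsiT ψ xb w with hadef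
  set b := DpsiT ψ yb w with hbdef
  -- bound on the difference of the transposed gradients
  have key : ∀ v : ℝ × ℝ, ‖v‖ = 1 →
      |dot3 (fderiv ℝ ψ xb v) w - dot3 (fderiv ℝ ψ yb v) w| ≤ 3 * Mψ ^ 2 * L ^ 2 := by
    intro v hv
    rw [dot3_sub_left,
      show fderiv ℝ ψ xb v - fderiv ℝ ψ yb v = (fderiv ℝ ψ xb - fderiv ℝ ψ yb) v from by
        simp [ContinuousLinearMap.sub_apply]]
    have hA : ‖(fderiv ℝ ψ xb - fderiv ℝ ψ yb) v‖ ≤ Mψ * L := by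
      have := ContinuousLinearMap.le_opNorm (fderiv ℝ ψ xb - fderiv ℝ ψ yb) v
      rw [hv, mul_one] at this
      have h5 : Mψ * s ≤ Mψ * L := mul_le_mul_of_nonneg_left hsL hMp.le
      linarith
    calc |dot3 ((fderiv ℝ ψ xb - fderiv ℝ ψ yb) v) w|
        ≤ 3 * ‖(fderiv ℝ ψ xb - fderiv ℝ ψ yb) v‖ * ‖w‖ := abs_dot3_le _ _
      _ = 3 * (‖(fderiv ℝ ψ xb - fderiv ℝ ψ yb) v‖ * ‖w‖) := by ring
      _ ≤ 3 * ((Mψ * L) * (Mψ * L)) :=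
          mul_le_mul_of_nonneg_left
            (mul_le_mul hA hwle (norm_nonneg _) (mul_nonneg hMp.le hLpos.le)) (by norm_num)
      _ = 3 * Mψ ^ 2 * L ^ 2 := by ring
  have habd : norm2 (a - b) ≤ 6 * Mψ ^ 2 * L ^ 2 := by
    have e1 : ‖((1:ℝ),(0:ℝ))‖ = 1 := by simp [Prod.norm_def]
    have e2 : ‖((0:ℝ),(1:ℝ))‖ = 1 := by simp [Prod.norm_def]
    have h1c := key _ e1
    have h2c := key _ e2
    have hfst : (a - b).1 = dot3 (fderiv ℝ ψ xb (1,0)) w - dot3 (fderiv ℝ ψ yb (1,0)) w := rfl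
    have hsnd : (a - b).2 = dot3 (fderiv ℝ ψ xb (0,1)) w - dot3 (fderiv ℝ ψ yb (0,1)) w := rfl
    have hsum := norm2_le_sum (a - b)
    rw [hfst, hsnd] at hsum
    linarith
  -- hat difference
  have hnapos : 0 < norm2 (perp2 a) := by
    rw [norm2_perp2]
    exact lt_of_lt_of_le (by positivity) hax
  have hnbpos : 0 < norm2 (perp2 b) := by
    rw [norm2_perp2]
    exact lt_of_lt_of_le (by positivity) hay
  have hhat : norm2 (hat2 (perp2 a) - hat2 (perp2 b)) ≤ 12 * Mψ ^ 2 / mψ * L := by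
    have h0 := hat2_sub_le hnapos hnbpos
    have hABsub : norm2 (perp2 a - perp2 b) = norm2 (a - b) := by
      rw [perp2_sub, norm2_perp2]
    have hden : mψ * L ≤ norm2 (perp2 a) := by rw [norm2_perp2]; exact hax
    calc norm2 (hat2 (perp2 a) - hat2 (perp2 b))
        ≤ 2 * norm2 (perp2 a - perp2 b) / norm2 (perp2 a) := h0
      _ ≤ 2 * (6 * Mψ ^ 2 * L ^ 2) / (mψ * L) := by
          apply div_le_div₀ (by positivity) ?_ (by positivity) hden
          rw [hABsub]; linarith
      _ = 12 * Mψ ^ 2 / mψ * L := by field_simp; ring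
  -- rewrite goal to eliminate lam
  rw [perp2_smul lam a, hat2_smul hlam (perp2 a), perp2_smul lam b, hat2_smul hlam (perp2 b)]
  set ξ := Real.exp (-xb.1) • hat2 (perp2 a) with hxidef
  set η := Real.exp (-yb.1) • hat2 (perp2 b) with hetadef
  have hex : Real.exp (-xb.1) ≤ Real.exp 1 := Real.exp_le_exp.2 (by linarith [hx1.1])
  have hey : Real.exp (-yb.1) ≤ Real.exp 1 := Real.exp_le_exp.2 (by linarith [hy1.1])
  have hediff : |Real.exp (-xb.1) - Real.exp (-yb.1)| ≤ Real.exp 1 * s := by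
    have h0 := exp_lip hx1 hy1
    have h5 : |xb.1 - yb.1| ≤ s := by
      have := norm_fst_le (xb - yb)
      simpa [Real.norm_eq_abs] using this
    calc |Real.exp (-xb.1) - Real.exp (-yb.1)| ≤ Real.exp 1 * |xb.1 - yb.1| := h0
      _ ≤ Real.exp 1 * s := mul_le_mul_of_nonneg_left h5 hEpos.le
  set K := Real.exp 1 * (12 * Mψ ^ 2 / mψ + 1) with hKdef
  have hK0 : 0 ≤ K := by
    apply mul_nonneg hEpos.le
    have : (0:ℝ) ≤ 12 * Mψ ^ 2 / mψ := div_nonneg (by positivity) hm.le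
    linarith
  have hξη : norm2 (ξ - η) ≤ K * L := by
    have decomp : ξ - η = Real.exp (-xb.1) • (hat2 (perp2 a) - hat2 (perp2 b)) +
        (Real.exp (-xb.1) - Real.exp (-yb.1)) • hat2 (perp2 b) := by
      rw [hxidef, hetadef, smul_sub, sub_smul]
      abel
    rw [decomp]
    have t1 : norm2 (Real.exp (-xb.1) • (hat2 (perp2 a) - hat2 (perp2 b)))
        ≤ Real.exp 1 * (12 * Mψ ^ 2 / mψ * L) := by
      rw [norm2_smul, abs_of_pos (Real.exp_pos _)]
      exact mul_le_mul hex hhat (norm2_nonneg _) hEpos.le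
    have t2 : norm2 ((Real.exp (-xb.1) - Real.exp (-yb.1)) • hat2 (perp2 b))
        ≤ Real.exp 1 * s := by
      rw [norm2_smul]
      calc |Real.exp (-xb.1) - Real.exp (-yb.1)| * norm2 (hat2 (perp2 b))
          ≤ (Real.exp 1 * s) * 1 :=
            mul_le_mul hediff (norm2_hat2_le _) (norm2_nonneg _) (by positivity)
        _ = Real.exp 1 * s := mul_one _
    have hss : Real.exp 1 * s ≤ Real.exp 1 * L := mul_le_mul_of_nonneg_left hsL hEpos.le
    calc norm2 _ ≤ _ + _ := norm2_add_le _ _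
      _ ≤ Real.exp 1 * (12 * Mψ ^ 2 / mψ * L) + Real.exp 1 * L := by linarith
      _ = K * L := by rw [hKdef]; ring
  have hnξ : ‖ξ‖ ≤ Real.exp 1 := by
    refine (norm_le_norm2 _).trans ?_
    rw [hxidef, norm2_smul, abs_of_pos (Real.exp_pos _)]
    calc Real.exp (-xb.1) * norm2 (hat2 (perp2 a)) ≤ Real.exp 1 * 1 :=
          mul_le_mul hex (norm2_hat2_le _) (norm2_nonneg _) hEpos.le
      _ = Real.exp 1 := mul_one _
  have hnη : ‖η‖ ≤ Real.exp 1 := by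
    refine (norm_le_norm2 _).trans ?_
    rw [hetadef, norm2_smul, abs_of_pos (Real.exp_pos _)]
    calc Real.exp (-yb.1) * norm2 (hat2 (perp2 b)) ≤ Real.exp 1 * 1 :=
          mul_le_mul hey (norm2_hat2_le _) (norm2_nonneg _) hEpos.le
      _ = Real.exp 1 := mul_one _
  have hnξη : ‖ξ - η‖ ≤ K * L := (norm_le_norm2 _).trans hξη
  -- second derivative difference
  set Hx := fderiv ℝ (fderiv ℝ ψ) xb with hHxdef
  set Hy := fderiv ℝ (fderiv ℝ ψ) yb with hHydef
  have hD2x : D2psi ψ xb ξ = Hx ξ ξ := D2psi_eq ψ hψ xb ξ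
  have hD2y : D2psi ψ yb η = Hy η η := D2psi_eq ψ hψ yb η
  have hHy : ‖Hy‖ ≤ Mψ := (hM yb hy).2.2.1
  have hΔ : ‖Hx ξ ξ - Hy η η‖ ≤ (Mψ * Real.exp 1 ^ 2 + 2 * Mψ * Real.exp 1 * K) * L := by
    have decomp2 : Hx ξ ξ - Hy η η =
        ((Hx - Hy) ξ) ξ + ((Hy (ξ - η)) ξ + (Hy η) (ξ - η)) := by
      simp only [ContinuousLinearMap.sub_apply, map_sub]
      abel
    have b1 : ‖((Hx - Hy) ξ) ξ‖ ≤ Mψ * Real.exp 1 ^ 2 * L := by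
      have c1 : ‖(Hx - Hy) ξ‖ ≤ ‖Hx - Hy‖ * ‖ξ‖ := ContinuousLinearMap.le_opNorm _ _
      have c2 : ‖((Hx - Hy) ξ) ξ‖ ≤ ‖(Hx - Hy) ξ‖ * ‖ξ‖ := ContinuousLinearMap.le_opNorm _ _
      have c3 : ‖Hx - Hy‖ ≤ Mψ * L := by
        have h5 : Mψ * s ≤ Mψ * L := mul_le_mul_of_nonneg_left hsL hMp.le
        linarith [hHlip]
      calc ‖((Hx - Hy) ξ) ξ‖ ≤ ‖(Hx - Hy) ξ‖ * ‖ξ‖ := c2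
        _ ≤ (‖Hx - Hy‖ * ‖ξ‖) * ‖ξ‖ := mul_le_mul_of_nonneg_right c1 (norm_nonneg _)
        _ ≤ ((Mψ * L) * Real.exp 1) * Real.exp 1 :=
            mul_le_mul (mul_le_mul c3 hnξ (norm_nonneg _)
              (mul_nonneg hMp.le hLpos.le)) hnξ (norm_nonneg _)
              (mul_nonneg (mul_nonneg hMp.le hLpos.le) hEpos.le)
        _ = Mψ * Real.exp 1 ^ 2 * L := by ring
    have b2 : ‖(Hy (ξ - η)) ξ‖ ≤ Mψ * Real.exp 1 * (K * L) := by
      have c1 : ‖Hy (ξ - η)‖ ≤ ‖Hy‖ * ‖ξ - η‖ := ContinuousLinearMap.le_opNorm _ _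
      have c2 : ‖(Hy (ξ - η)) ξ‖ ≤ ‖Hy (ξ - η)‖ * ‖ξ‖ := ContinuousLinearMap.le_opNorm _ _
      calc ‖(Hy (ξ - η)) ξ‖ ≤ ‖Hy (ξ - η)‖ * ‖ξ‖ := c2
        _ ≤ (‖Hy‖ * ‖ξ - η‖) * ‖ξ‖ := mul_le_mul_of_nonneg_right c1 (norm_nonneg _)
        _ ≤ (Mψ * (K * L)) * Real.exp 1 :=
            mul_le_mul (mul_le_mul hHy hnξη (norm_nonneg _) hMp.le) hnξ (norm_nonneg _)
              (mul_nonneg hMp.le (mul_nonneg hK0 hLpos.le))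
        _ = Mψ * Real.exp 1 * (K * L) := by ring
    have b3 : ‖(Hy η) (ξ - η)‖ ≤ Mψ * Real.exp 1 * (K * L) := by
      have c1 : ‖Hy η‖ ≤ ‖Hy‖ * ‖η‖ := ContinuousLinearMap.le_opNorm _ _
      have c2 : ‖(Hy η) (ξ - η)‖ ≤ ‖Hy η‖ * ‖ξ - η‖ := ContinuousLinearMap.le_opNorm _ _
      calc ‖(Hy η) (ξ - η)‖ ≤ ‖Hy η‖ * ‖ξ - η‖ := c2
        _ ≤ (‖Hy‖ * ‖η‖) * ‖ξ - η‖ := mul_le_mul_of_nonneg_right c1 (norm_nonneg _)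
        _ ≤ (Mψ * Real.exp 1) * (K * L) :=
            mul_le_mul (mul_le_mul hHy hnη (norm_nonneg _) hMp.le) hnξη (norm_nonneg _)
              (mul_nonneg hMp.le hEpos.le)
        _ = Mψ * Real.exp 1 * (K * L) := by ring
    calc ‖Hx ξ ξ - Hy η η‖
        = ‖((Hx - Hy) ξ) ξ + ((Hy (ξ - η)) ξ + (Hy η) (ξ - η))‖ := by rw [decomp2]
      _ ≤ ‖((Hx - Hy) ξ) ξ‖ + ‖(Hy (ξ - η)) ξ + (Hy η) (ξ - η)‖ := norm_add_le _ _
      _ ≤ ‖((Hx - Hy) ξ) ξ‖ + (‖(Hy (ξ - η)) ξ‖ + ‖(Hy η) (ξ - η)‖) := by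
          linarith [norm_add_le ((Hy (ξ - η)) ξ) ((Hy η) (ξ - η))]
      _ ≤ (Mψ * Real.exp 1 ^ 2 + 2 * Mψ * Real.exp 1 * K) * L := by
          rw [add_mul]
          have : 2 * Mψ * Real.exp 1 * K * L = Mψ * Real.exp 1 * (K * L)
              + Mψ * Real.exp 1 * (K * L) := by ring
          rw [this]
          linarith
  calc |dot3 w (D2psi ψ xb ξ - D2psi ψ yb η)|
      ≤ 3 * ‖w‖ * ‖D2psi ψ xb ξ - D2psi ψ yb η‖ := abs_dot3_le _ _
    _ ≤ 3 * (Mψ * L) * ((Mψ * Real.exp 1 ^ 2 + 2 * Mψ * Real.exp 1 * K) * L) := by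
        rw [hD2x, hD2y]
        have hc0 : (0:ℝ) ≤ Mψ * Real.exp 1 ^ 2 + 2 * Mψ * Real.exp 1 * K := by
          have h6 : (0:ℝ) ≤ 2 * Mψ * Real.exp 1 * K :=
            mul_nonneg (mul_nonneg (by linarith) hEpos.le) hK0
          nlinarith [hMp.le, hEpos.le]
        calc 3 * ‖w‖ * ‖Hx ξ ξ - Hy η η‖ = 3 * (‖w‖ * ‖Hx ξ ξ - Hy η η‖) := by ring
          _ ≤ 3 * ((Mψ * L) * ((Mψ * Real.exp 1 ^ 2 + 2 * Mψ * Real.exp 1 * K) * L)) :=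
              mul_le_mul_of_nonneg_left
                (mul_le_mul hwle hΔ (norm_nonneg _) (mul_nonneg hMp.le hLpos.le))
                (by norm_num)
          _ = 3 * (Mψ * L) * ((Mψ * Real.exp 1 ^ 2 + 2 * Mψ * Real.exp 1 * K) * L) := by
              ring
    _ = 3 * Mψ * (Mψ * Real.exp 1 ^ 2 +
        2 * Mψ * Real.exp 1 * (Real.exp 1 * (12 * Mψ ^ 2 / mψ + 1))) * L ^ 2 := by
        rw [hKdef]; ring
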